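/- J*(b) is a convex function of the storage-capacity vector b on ℝ^m_+, and it is non-increasing: if b ≤ b' componentwise then J*(b') ≤ J*(b). (Convexity/monotonicity part of Theorem 1.) -/

import Mathlib

open MeasureTheory

noncomputable section

/-- Total dispatch cost `g(v) = ∑ i, (αᵢ·max(vᵢ,0) − βᵢ·max(−vᵢ,0))`. -/
def dispatchCost {m : ℕ} (α β : Fin m → ℝ) (v : Fin m → ℝ) : ℝ :=
  ∑ i, (α i * max (v i) 0 - β i * max (-v i) 0)

/-- Storage state generated by the increments `u`: `z 0 = 0`, `z (k+1) = z k + u k`. -/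
def storState {m : ℕ} (u : ℕ → Fin m → ℝ) : ℕ → Fin m → ℝ
  | 0 => 0
  | k + 1 => storState u k + u k

/-- A causal control policy: at each time `k` it maps the observed history of net demands
`ξ_0, …, ξ_k` (taking values in the finite set `Ξ`) to a storage control `u k` and a
dispatch `v k`.  Causality is expressed by letting the controls depend on the whole path
while requiring that they only depend on its first `k+1` coordinates. -/
structure Policy (m : ℕ) (Ξ : Finset (Fin m → ℝ)) where
  u : ℕ → (ℕ → {x // x ∈ Ξ}) → Fin m → ℝ
  v : ℕ → (ℕ → {x // x ∈ Ξ}) → Fin m → ℝ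
  causal_u : ∀ k ω ω', (∀ j ≤ k, ω j = ω' j) → u k ω = u k ω'
  causal_v : ∀ k ω ω', (∀ j ≤ k, ω j = ω' j) → v k ω = v k ω'

/-- The storage state trajectory induced by a policy along a net-demand path. -/
def Policy.z {m : ℕ} {Ξ : Finset (Fin m → ℝ)} (π : Policy m Ξ)
    (ω : ℕ → {x // x ∈ Ξ}) : ℕ → Fin m → ℝ :=
  storState fun k => π.u k ω

/-- Admissibility of a policy for horizon `N`, injection polytope `P` and storage
capacity vector `b`: along every net-demand path, `0 ≤ z k + u k ≤ b` componentwise and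
`v k − u k − ξ k ∈ P` for all `k < N`. -/
def Policy.Admissible {m : ℕ} {Ξ : Finset (Fin m → ℝ)} (π : Policy m Ξ)
    (N : ℕ) (P : Set (Fin m → ℝ)) (b : Fin m → ℝ) : Prop :=
  ∀ ω : ℕ → {x // x ∈ Ξ}, ∀ k, k < N →
    (∀ i, 0 ≤ π.z ω k i + π.u k ω i ∧ π.z ω k i + π.u k ω i ≤ b i) ∧
    (π.v k ω - π.u k ω - (ω k : Fin m → ℝ)) ∈ P

/-- Expected cost of dispatch of a policy over `N` periods. -/
def Policy.cost {m : ℕ} {Ξ : Finset (Fin m → ℝ)} (π : Policy m Ξ)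
    (N : ℕ) (α β : Fin m → ℝ) (μ : Measure (ℕ → {x // x ∈ Ξ})) : ℝ :=
  ∫ ω, ∑ k ∈ Finset.range N, dispatchCost α β (π.v k ω) ∂μ

/-- Optimal cost `J*(b)`: infimum of expected dispatch cost over admissible policies. -/
def Jstar {m : ℕ} (Ξ : Finset (Fin m → ℝ)) (N : ℕ) (α β : Fin m → ℝ)
    (P : Set (Fin m → ℝ)) (μ : Measure (ℕ → {x // x ∈ Ξ})) (b : Fin m → ℝ) : ℝ :=
  sInf { c : ℝ | ∃ π : Policy m Ξ, π.Admissible N P b ∧ π.cost N α β μ = c }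

/-! ### Auxiliary lemmas -/

lemma aux_le_of_eps {a b : ℝ} (h : ∀ ε : ℝ, 0 < ε → a ≤ b + ε) : a ≤ b := by
  by_contra hc
  push_neg at hc
  have := h ((a - b) / 2) (by linarith)
  linarith

lemma aux_max_zero_eq (r : ℝ) : max r 0 = (r + |r|) / 2 := by
  rcases le_total r 0 with h | h
  · rw [max_eq_right h, abs_of_nonpos h]; ring
  · rw [max_eq_left h, abs_of_nonneg h]; ring

lemma aux_gi_convex (a c t x y : ℝ) (hc : 0 ≤ c) (hac : c ≤ a) (ht : 0 ≤ t) (ht1 : t ≤ 1) :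
    a * max (t * x + (1 - t) * y) 0 - c * max (-(t * x + (1 - t) * y)) 0
      ≤ t * (a * max x 0 - c * max (-x) 0) + (1 - t) * (a * max y 0 - c * max (-y) 0) := by
  have habs : |t * x + (1 - t) * y| ≤ t * |x| + (1 - t) * |y| := by
    calc |t * x + (1 - t) * y| ≤ |t * x| + |(1 - t) * y| := abs_add_le _ _
    _ = t * |x| + (1 - t) * |y| := by
        rw [abs_mul, abs_mul, abs_of_nonneg ht, abs_of_nonneg (by linarith : (0:ℝ) ≤ 1 - t)]
  have key := mul_le_mul_of_nonneg_left habs (by linarith : (0:ℝ) ≤ a - c)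
  simp only [aux_max_zero_eq, abs_neg]
  nlinarith [key]

lemma aux_dispatchCost_convex {m : ℕ} (α β : Fin m → ℝ) (hβ : ∀ i, 0 ≤ β i)
    (hαβ : ∀ i, β i ≤ α i) (t : ℝ) (ht : 0 ≤ t) (ht1 : t ≤ 1) (v w : Fin m → ℝ) :
    dispatchCost α β (t • v + (1 - t) • w)
      ≤ t * dispatchCost α β v + (1 - t) * dispatchCost α β w := by
  unfold dispatchCost
  rw [Finset.mul_sum, Finset.mul_sum, ← Finset.sum_add_distrib]
  apply Finset.sum_le_sum
  intro i _
  have h := aux_gi_convex (α i) (β i) t (v i) (w i) (hβ i) (hαβ i) ht ht1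
  simp only [Pi.add_apply, Pi.smul_apply, smul_eq_mul]
  exact h

lemma aux_gi_abs_le (a c x K : ℝ) (ha : 0 ≤ a) (hc : 0 ≤ c) (hx : |x| ≤ K) :
    |a * max x 0 - c * max (-x) 0| ≤ (a + c) * K := by
  have hK : 0 ≤ K := le_trans (abs_nonneg x) hx
  rcases le_total x 0 with h | h
  · rw [max_eq_right h, max_eq_left (by linarith : (0:ℝ) ≤ -x), mul_zero, zero_sub, abs_neg,
      abs_mul, abs_of_nonneg hc]
    have hxx : |(-x)| ≤ K := by rwa [abs_neg]
    nlinarith [abs_nonneg (-x)]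
  · rw [max_eq_left h, max_eq_right (by linarith : -x ≤ 0), mul_zero, sub_zero,
      abs_mul, abs_of_nonneg ha]
    nlinarith [abs_nonneg x]

lemma aux_dispatchCost_abs_le {m : ℕ} (α β : Fin m → ℝ) (hβ : ∀ i, 0 ≤ β i)
    (hαβ : ∀ i, β i ≤ α i) (v : Fin m → ℝ) (K : ℝ) (hv : ∀ i, |v i| ≤ K) :
    |dispatchCost α β v| ≤ (∑ i, (α i + β i)) * K := by
  calc |dispatchCost α β v| ≤ ∑ i, |α i * max (v i) 0 - β i * max (-v i) 0| :=
        Finset.abs_sum_le_sum_abs _ _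
  _ ≤ ∑ i, (α i + β i) * K := Finset.sum_le_sum fun i _ =>
        aux_gi_abs_le (α i) (β i) (v i) K (le_trans (hβ i) (hαβ i)) (hβ i) (hv i)
  _ = _ := by rw [Finset.sum_mul]

lemma aux_measurable_policy_term {m : ℕ} {Ξ : Finset (Fin m → ℝ)} (π : Policy m Ξ)
    (α β : Fin m → ℝ) (k : ℕ) :
    Measurable fun ω : ℕ → {x // x ∈ Ξ} => dispatchCost α β (π.v k ω) := by
  classical
  rcases isEmpty_or_nonempty {x // x ∈ Ξ} with hempty | hne
  · have : IsEmpty (ℕ → {x // x ∈ Ξ}) := ⟨fun ω => hempty.false (ω 0)⟩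
    exact measurable_of_empty _
  · obtain ⟨x₀⟩ := hne
    have hres : Measurable fun (ω : ℕ → {x // x ∈ Ξ}) (j : Fin (k + 1)) => ω (j : ℕ) :=
      measurable_pi_lambda _ fun j => measurable_pi_apply (j : ℕ)
    set F : (Fin (k + 1) → {x // x ∈ Ξ}) → ℝ := fun y =>
      dispatchCost α β (π.v k fun j => if h : j < k + 1 then y ⟨j, h⟩ else x₀) with hF
    have hFmeas : Measurable F := measurable_of_countable F
    have heq : (fun ω : ℕ → {x // x ∈ Ξ} => dispatchCost α β (π.v k ω))
        = F ∘ fun (ω : ℕ → {x // x ∈ Ξ}) (j : Fin (k + 1)) => ω (j : ℕ) := by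
      funext ω
      simp only [Function.comp_apply, hF]
      congr 1
      apply π.causal_v
      intro j hj
      rw [dif_pos (Nat.lt_succ_of_le hj)]
    rw [heq]
    exact hFmeas.comp hres

lemma aux_z_bound {m : ℕ} {Ξ : Finset (Fin m → ℝ)} (π : Policy m Ξ)
    {N : ℕ} {P : Set (Fin m → ℝ)} {b : Fin m → ℝ}
    (hadm : π.Admissible N P b) (hb : ∀ i, 0 ≤ b i)
    (ω : ℕ → {x // x ∈ Ξ}) :
    ∀ k, k ≤ N → ∀ i, 0 ≤ π.z ω k i ∧ π.z ω k i ≤ b i := by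
  intro k
  induction k with
  | zero =>
      intro _ i
      constructor <;> simp [Policy.z, storState, hb i]
  | succ k _ =>
      intro hk i
      have hk' : k < N := lt_of_lt_of_le (Nat.lt_succ_self k) hk
      have h := (hadm ω k hk').1 i
      have hz : π.z ω (k + 1) i = π.z ω k i + π.u k ω i := rfl
      rw [hz]
      exact h

lemma aux_v_bound {m : ℕ} {Ξ : Finset (Fin m → ℝ)} (π : Policy m Ξ)
    {N : ℕ} {P : Set (Fin m → ℝ)} {b : Fin m → ℝ}
    (hadm : π.Admissible N P b) (hb : ∀ i, 0 ≤ b i)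
    (RP : ℝ) (hRP : ∀ p ∈ P, ∀ i, |p i| ≤ RP)
    (RX : ℝ) (hRX : ∀ x ∈ Ξ, ∀ i, |x i| ≤ RX)
    (ω : ℕ → {x // x ∈ Ξ}) (k : ℕ) (hk : k < N) (i : Fin m) :
    |π.v k ω i| ≤ RP + ‖b‖ + RX := by
  have hz1 := aux_z_bound π hadm hb ω k (le_of_lt hk) i
  have hz2 := aux_z_bound π hadm hb ω (k + 1) hk i
  have hbi : b i ≤ ‖b‖ := le_trans (le_abs_self _) (norm_le_pi_norm b i)
  have hzeq : π.z ω (k + 1) i = π.z ω k i + π.u k ω i := rfl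
  have hu : |π.u k ω i| ≤ ‖b‖ := by
    rw [abs_le]
    constructor <;> nlinarith [hz1.1, hz1.2, hz2.1, hz2.2]
  have hp := hRP _ ((hadm ω k hk).2) i
  have hx := hRX _ (ω k).2 i
  have hdecomp : π.v k ω i = (π.v k ω - π.u k ω - ((ω k : Fin m → ℝ))) i
      + π.u k ω i + ((ω k : Fin m → ℝ)) i := by
    simp [Pi.sub_apply]
    ring
  have h1 := abs_add_le ((π.v k ω - π.u k ω - ((ω k : Fin m → ℝ))) i + π.u k ω i)
      (((ω k : Fin m → ℝ)) i)
  have h2 := abs_add_le ((π.v k ω - π.u k ω - ((ω k : Fin m → ℝ))) i) (π.u k ω i)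
  rw [hdecomp]
  linarith

lemma aux_integrand_bound {m : ℕ} {Ξ : Finset (Fin m → ℝ)} (π : Policy m Ξ)
    {N : ℕ} {P : Set (Fin m → ℝ)} {b : Fin m → ℝ}
    (hadm : π.Admissible N P b) (hb : ∀ i, 0 ≤ b i)
    (α β : Fin m → ℝ) (hβ : ∀ i, 0 ≤ β i) (hαβ : ∀ i, β i ≤ α i)
    (RP : ℝ) (hRP : ∀ p ∈ P, ∀ i, |p i| ≤ RP)
    (RX : ℝ) (hRX : ∀ x ∈ Ξ, ∀ i, |x i| ≤ RX)
    (ω : ℕ → {x // x ∈ Ξ}) :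
    |∑ k ∈ Finset.range N, dispatchCost α β (π.v k ω)|
      ≤ N * ((∑ i, (α i + β i)) * (RP + ‖b‖ + RX)) := by
  calc |∑ k ∈ Finset.range N, dispatchCost α β (π.v k ω)|
      ≤ ∑ k ∈ Finset.range N, |dispatchCost α β (π.v k ω)| := Finset.abs_sum_le_sum_abs _ _
  _ ≤ ∑ _k ∈ Finset.range N, (∑ i, (α i + β i)) * (RP + ‖b‖ + RX) := by
      apply Finset.sum_le_sum
      intro k hk
      exact aux_dispatchCost_abs_le α β hβ hαβ _ _
        (fun i => aux_v_bound π hadm hb RP hRP RX hRX ω k (Finset.mem_range.mp hk) i)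
  _ = N * ((∑ i, (α i + β i)) * (RP + ‖b‖ + RX)) := by
      rw [Finset.sum_const, Finset.card_range, nsmul_eq_mul]

lemma aux_integrable {m : ℕ} {Ξ : Finset (Fin m → ℝ)} (π : Policy m Ξ)
    (N : ℕ) (α β : Fin m → ℝ) (μ : Measure (ℕ → {x // x ∈ Ξ}))
    [IsProbabilityMeasure μ] (C : ℝ)
    (hbound : ∀ ω, |∑ k ∈ Finset.range N, dispatchCost α β (π.v k ω)| ≤ C) :
    Integrable (fun ω => ∑ k ∈ Finset.range N, dispatchCost α β (π.v k ω)) μ := by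
  apply Integrable.mono' (integrable_const C)
  · exact (Finset.measurable_sum _ fun k _ =>
      aux_measurable_policy_term π α β k).aestronglyMeasurable
  · exact Filter.Eventually.of_forall fun ω => by
      rw [Real.norm_eq_abs]; exact hbound ω

lemma aux_storState_zero {m : ℕ} (k : ℕ) :
    storState (fun _ => (0 : Fin m → ℝ)) k = 0 := by
  induction k with
  | zero => rfl
  | succ k ih => simp [storState, ih]

/-- The trivial policy: no storage action, dispatch equals net demand. -/
def zeroPolicy (m : ℕ) (Ξ : Finset (Fin m → ℝ)) : Policy m Ξ where
  u := fun _ _ => 0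
  v := fun k ω => (ω k : Fin m → ℝ)
  causal_u := fun _ _ _ _ => rfl
  causal_v := fun k ω ω' h => by show (ω k : Fin m → ℝ) = ω' k; rw [h k le_rfl]

/-- `J*` is convex and non-increasing on `ℝ^m₊` (Theorem 1, convexity and
monotonicity part). -/
theorem jstar_convex_and_nonincreasing {m : ℕ} (N : ℕ)
    (Ξ : Finset (Fin m → ℝ))
    (μ : Measure (ℕ → {x // x ∈ Ξ})) [IsProbabilityMeasure μ]
    (P : Set (Fin m → ℝ)) (hPne : P.Nonempty) (hPcomp : IsCompact P)
    (hPconv : Convex ℝ P) (hP0 : (0 : Fin m → ℝ) ∈ P)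
    (α β : Fin m → ℝ) (hβ : ∀ i, 0 ≤ β i) (hαβ : ∀ i, β i ≤ α i) :
    (∀ b b' : Fin m → ℝ, (∀ i, 0 ≤ b i) → (∀ i, 0 ≤ b' i) →
      ∀ t : ℝ, 0 ≤ t → t ≤ 1 →
        Jstar Ξ N α β P μ (t • b + (1 - t) • b')
          ≤ t * Jstar Ξ N α β P μ b + (1 - t) * Jstar Ξ N α β P μ b') ∧
    (∀ b b' : Fin m → ℝ, (∀ i, 0 ≤ b i) → (∀ i, b i ≤ b' i) →
        Jstar Ξ N α β P μ b' ≤ Jstar Ξ N α β P μ b) := by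
  classical
  -- bound for P
  obtain ⟨RP, hRP0⟩ := hPcomp.isBounded.exists_norm_le
  have hRP : ∀ p ∈ P, ∀ i, |p i| ≤ RP := fun p hp i => by
    have := norm_le_pi_norm p i
    have h2 := hRP0 p hp
    simp only [Real.norm_eq_abs] at this
    linarith
  -- bound for Ξ
  obtain ⟨RX0, hRX0⟩ := Finset.exists_le (Ξ.image fun x => ‖x‖)
  have hRX : ∀ x ∈ Ξ, ∀ i, |x i| ≤ RX0 := fun x hx i => by
    have h1 := norm_le_pi_norm x i
    have h2 := hRX0 ‖x‖ (Finset.mem_image_of_mem _ hx)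
    simp only [Real.norm_eq_abs] at h1
    linarith
  -- the feasible-cost sets
  set S : (Fin m → ℝ) → Set ℝ := fun b =>
    { c : ℝ | ∃ π : Policy m Ξ, π.Admissible N P b ∧ π.cost N α β μ = c } with hS
  have hJ : ∀ b, Jstar Ξ N α β P μ b = sInf (S b) := fun _ => rfl
  -- the constant for a given capacity vector
  set C : (Fin m → ℝ) → ℝ := fun b => N * ((∑ i, (α i + β i)) * (RP + ‖b‖ + RX0)) with hC
  -- every admissible policy has integrable cost integrand and cost bounded below
  have hInt : ∀ (b : Fin m → ℝ), (∀ i, 0 ≤ b i) → ∀ π : Policy m Ξ,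
      π.Admissible N P b →
      Integrable (fun ω => ∑ k ∈ Finset.range N, dispatchCost α β (π.v k ω)) μ := by
    intro b hb π hadm
    exact aux_integrable π N α β μ (C b)
      (fun ω => aux_integrand_bound π hadm hb α β hβ hαβ RP hRP RX0 hRX ω)
  have hcost_lb : ∀ (b : Fin m → ℝ), (∀ i, 0 ≤ b i) → ∀ c ∈ S b, -(C b) ≤ c := by
    intro b hb c hc
    obtain ⟨π, hadm, hcost⟩ := hc
    have hint := hInt b hb π hadm
    have hge : ∀ ω, -(C b) ≤ ∑ k ∈ Finset.range N, dispatchCost α β (π.v k ω) := fun ω =>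
      neg_le_of_abs_le (aux_integrand_bound π hadm hb α β hβ hαβ RP hRP RX0 hRX ω)
    have : -(C b) = ∫ _ω, -(C b) ∂μ := by simp
    rw [← hcost, Policy.cost, this]
    exact integral_mono (integrable_const _) hint hge
  have hbdd : ∀ (b : Fin m → ℝ), (∀ i, 0 ≤ b i) → BddBelow (S b) := fun b hb =>
    ⟨-(C b), fun c hc => hcost_lb b hb c hc⟩
  -- the trivial policy shows nonemptiness
  have hzadm : ∀ (b : Fin m → ℝ), (∀ i, 0 ≤ b i) →
      (zeroPolicy m Ξ).Admissible N P b := by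
    intro b hb ω k _
    constructor
    · intro i
      have hz : (zeroPolicy m Ξ).z ω k i = 0 := by
        show storState (fun _ => (0 : Fin m → ℝ)) k i = 0
        rw [aux_storState_zero]; rfl
      have hu : (zeroPolicy m Ξ).u k ω i = 0 := rfl
      rw [hz, hu]
      constructor
      · norm_num
      · simpa using hb i
    · have : (zeroPolicy m Ξ).v k ω - (zeroPolicy m Ξ).u k ω - ((ω k : Fin m → ℝ)) = 0 := by
        simp [zeroPolicy]
      rw [this]
      exact hP0
  have hSne : ∀ (b : Fin m → ℝ), (∀ i, 0 ≤ b i) → (S b).Nonempty := fun b hb =>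
    ⟨(zeroPolicy m Ξ).cost N α β μ, zeroPolicy m Ξ, hzadm b hb, rfl⟩
  constructor
  · -- convexity
    intro b b' hb hb' t ht ht1
    set b'' : Fin m → ℝ := t • b + (1 - t) • b' with hb''def
    have hb'' : ∀ i, 0 ≤ b'' i := by
      intro i
      have := mul_nonneg ht (hb i)
      have := mul_nonneg (by linarith : (0:ℝ) ≤ 1 - t) (hb' i)
      simp only [hb''def, Pi.add_apply, Pi.smul_apply, smul_eq_mul]
      linarith
    rw [hJ, hJ, hJ]
    apply aux_le_of_eps
    intro ε hε
    obtain ⟨c, hcS, hc⟩ := exists_lt_of_csInf_lt (hSne b hb)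
      (lt_add_of_pos_right (sInf (S b)) hε)
    obtain ⟨c', hcS', hc'⟩ := exists_lt_of_csInf_lt (hSne b' hb')
      (lt_add_of_pos_right (sInf (S b')) hε)
    obtain ⟨π, hπadm, hπc⟩ := hcS
    obtain ⟨π', hπadm', hπc'⟩ := hcS'
    -- the convex-combination policy
    set π'' : Policy m Ξ :=
      { u := fun k ω => t • π.u k ω + (1 - t) • π'.u k ω
        v := fun k ω => t • π.v k ω + (1 - t) • π'.v k ω
        causal_u := fun k ω ω' h => by
          show t • π.u k ω + (1 - t) • π'.u k ω = t • π.u k ω' + (1 - t) • π'.u k ω'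
          rw [π.causal_u k ω ω' h, π'.causal_u k ω ω' h]
        causal_v := fun k ω ω' h => by
          show t • π.v k ω + (1 - t) • π'.v k ω = t • π.v k ω' + (1 - t) • π'.v k ω'
          rw [π.causal_v k ω ω' h, π'.causal_v k ω ω' h] } with hπ''def
    have hz'' : ∀ ω k, π''.z ω k = t • π.z ω k + (1 - t) • π'.z ω k := by
      intro ω k
      induction k with
      | zero =>
          show (0 : Fin m → ℝ) = _
          simp [Policy.z, storState]
      | succ k ih =>
          show π''.z ω k + π''.u k ω = _
          rw [ih]
          show _ = t • (π.z ω k + π.u k ω) + (1 - t) • (π'.z ω k + π'.u k ω)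
          funext i
          simp only [Pi.add_apply, Pi.smul_apply, smul_eq_mul, hπ''def]
          ring
    have hadm'' : π''.Admissible N P b'' := by
      intro ω k hk
      obtain ⟨h1, h2⟩ := hπadm ω k hk
      obtain ⟨h1', h2'⟩ := hπadm' ω k hk
      constructor
      · intro i
        have e : π''.z ω k i + π''.u k ω i
            = t * (π.z ω k i + π.u k ω i) + (1 - t) * (π'.z ω k i + π'.u k ω i) := by
          rw [hz'' ω k]
          simp only [Pi.add_apply, Pi.smul_apply, smul_eq_mul, hπ''def]
          ring
        have eb : b'' i = t * b i + (1 - t) * b' i := by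
          simp [hb''def, Pi.add_apply, Pi.smul_apply, smul_eq_mul]
        rw [e, eb]
        have g1 := (h1 i).1
        have g2 := (h1 i).2
        have g1' := (h1' i).1
        have g2' := (h1' i).2
        constructor
        · nlinarith
        · nlinarith
      · have e : π''.v k ω - π''.u k ω - ((ω k : Fin m → ℝ))
            = t • (π.v k ω - π.u k ω - ((ω k : Fin m → ℝ)))
              + (1 - t) • (π'.v k ω - π'.u k ω - ((ω k : Fin m → ℝ))) := by
          funext i
          simp only [Pi.sub_apply, Pi.add_apply, Pi.smul_apply, smul_eq_mul, hπ''def]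
          ring
        rw [e]
        exact hPconv h2 h2' ht (by linarith) (by ring)
    -- cost comparison
    have hintπ := hInt b hb π hπadm
    have hintπ' := hInt b' hb' π' hπadm'
    have hint'' := hInt b'' hb'' π'' hadm''
    have hle : ∀ ω, (∑ k ∈ Finset.range N, dispatchCost α β (π''.v k ω))
        ≤ t * (∑ k ∈ Finset.range N, dispatchCost α β (π.v k ω))
          + (1 - t) * (∑ k ∈ Finset.range N, dispatchCost α β (π'.v k ω)) := by
      intro ω
      rw [Finset.mul_sum, Finset.mul_sum, ← Finset.sum_add_distrib]
      apply Finset.sum_le_sum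
      intro k _
      exact aux_dispatchCost_convex α β hβ hαβ t ht ht1 (π.v k ω) (π'.v k ω)
    have hcost'' : π''.cost N α β μ ≤ t * c + (1 - t) * c' := by
      rw [← hπc, ← hπc', Policy.cost, Policy.cost, Policy.cost]
      rw [← integral_const_mul, ← integral_const_mul, ← integral_add
        (hintπ.const_mul t) (hintπ'.const_mul (1 - t))]
      exact integral_mono hint'' ((hintπ.const_mul t).add (hintπ'.const_mul (1 - t))) hle
    have hmem : π''.cost N α β μ ∈ S b'' := ⟨π'', hadm'', rfl⟩
    have h1 := csInf_le (hbdd b'' hb'') hmem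
    have h2 : t * c ≤ t * (sInf (S b) + ε) := mul_le_mul_of_nonneg_left (le_of_lt hc) ht
    have h3 : (1 - t) * c' ≤ (1 - t) * (sInf (S b') + ε) :=
      mul_le_mul_of_nonneg_left (le_of_lt hc') (by linarith)
    nlinarith
  · -- monotonicity
    intro b b' hb hbb'
    have hb' : ∀ i, 0 ≤ b' i := fun i => le_trans (hb i) (hbb' i)
    rw [hJ, hJ]
    apply csInf_le_csInf (hbdd b' hb') (hSne b hb)
    intro c hc
    obtain ⟨π, hadm, hcost⟩ := hc
    refine ⟨π, ?_, hcost⟩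
    intro ω k hk
    obtain ⟨h1, h2⟩ := hadm ω k hk
    exact ⟨fun i => ⟨(h1 i).1, le_trans (h1 i).2 (hbb' i)⟩, h2⟩
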